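/- arXiv:1302.2377 — 4 statements merged into one kernel-verified Lean document; each statement's English description precedes it below -/
import Mathlib

section
/- Let R be a henselian discrete valuation ring with residue field of characteristic not 2, K its fraction field, v its valuation, and d ∈ K× with v(d) odd. Then the classes in K×/K×² of the nonzero values x² − d·y² (x, y ∈ K) are exactly the classes of 1 and of −d. -/
open Polynomial

/-- In a henselian local ring with residue characteristic not 2, `1 - r` is a square
for any `r` in the maximal ideal. -/
lemma aux_hensel_sq {R : Type*} [CommRing R] [HenselianLocalRing R]
    (h2 : (2 : IsLocalRing.ResidueField R) ≠ 0)
    (r : R) (hr : r ∈ IsLocalRing.maximalIdeal R) :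
    ∃ s : R, s ^ 2 = 1 - r := by
  have h2R : IsUnit (2 : R) := by
    rw [← IsLocalRing.residue_ne_zero_iff_isUnit]
    rwa [map_ofNat]
  obtain ⟨a, ha, -⟩ := HenselianLocalRing.is_henselian (X ^ 2 - C (1 - r))
    (monic_X_pow_sub_C _ (by norm_num)) 1 (by simpa using hr) (by
      simp only [derivative_sub, derivative_X_pow, derivative_C, sub_zero]
      simpa using h2R)
  refine ⟨a, ?_⟩
  have := ha
  simp only [IsRoot, eval_sub, eval_pow, eval_X, eval_C] at this
  linear_combination this

/-- Decomposition of a nonzero element of the fraction field of a DVR. -/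
lemma aux_decomp {R K : Type*} [CommRing R] [IsDomain R] [IsDiscreteValuationRing R]
    [Field K] [Algebra R K] [IsFractionRing R K]
    {π : R} (hπ : Irreducible π) {x : K} (hx : x ≠ 0) :
    ∃ (w : Rˣ) (m : ℤ), x = algebraMap R K w * algebraMap R K π ^ m := by
  have hπK : algebraMap R K π ≠ 0 := by
    simpa [IsFractionRing.to_map_eq_zero_iff] using hπ.ne_zero
  obtain ⟨r, s, hs, hrs⟩ := IsFractionRing.div_surjective (A := R) x
  have hs0 : s ≠ 0 := nonZeroDivisors.ne_zero hs
  have hr0 : r ≠ 0 := by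
    rintro rfl; simp at hrs; exact hx hrs.symm
  obtain ⟨a, wr, hwr⟩ := IsDiscreteValuationRing.eq_unit_mul_pow_irreducible hr0 hπ
  obtain ⟨b, ws, hws⟩ := IsDiscreteValuationRing.eq_unit_mul_pow_irreducible hs0 hπ
  refine ⟨wr * ws⁻¹, (a : ℤ) - (b : ℤ), ?_⟩
  rw [← hrs, hwr, hws]
  rw [zpow_sub₀ hπK, zpow_natCast, zpow_natCast]
  push_cast [map_mul, map_pow, map_units_inv]
  have hwsK : (algebraMap R K) (ws : R) ≠ 0 := by
    simpa [IsFractionRing.to_map_eq_zero_iff] using ws.ne_zero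
  have hπp : (algebraMap R K π) ^ b ≠ 0 := pow_ne_zero _ hπK
  field_simp

/-- `1 - w·π^m` is a square in `K` when `m > 0`. -/
lemma aux_one_sub_sq {R K : Type*} [CommRing R] [IsDomain R] [IsDiscreteValuationRing R]
    [HenselianLocalRing R] [Field K] [Algebra R K] [IsFractionRing R K]
    (h2 : (2 : IsLocalRing.ResidueField R) ≠ 0)
    {π : R} (hπ : Irreducible π) (w : Rˣ) {m : ℤ} (hm : 0 < m) :
    ∃ s : K, s ^ 2 = 1 - algebraMap R K w * algebraMap R K π ^ m := by
  have hmem : (w : R) * π ^ m.toNat ∈ IsLocalRing.maximalIdeal R := by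
    rw [IsLocalRing.mem_maximalIdeal, mem_nonunits_iff]
    intro h
    have : IsUnit (π ^ m.toNat) := isUnit_of_mul_isUnit_right h
    rw [isUnit_pow_iff (by omega : m.toNat ≠ 0)] at this
    exact hπ.not_isUnit this
  obtain ⟨s, hs⟩ := aux_hensel_sq h2 _ hmem
  refine ⟨algebraMap R K s, ?_⟩
  rw [show (algebraMap R K π) ^ m = algebraMap R K (π ^ m.toNat) by
    rw [map_pow, ← zpow_natCast]; congr 1; omega]
  rw [← map_pow, ← map_mul, hs, map_sub, map_one]

/-- Let `R` be a henselian discrete valuation ring with residue field of characteristic not 2,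
`K` its fraction field, `v` its valuation, and `d ∈ Kˣ` with `v(d)` odd. Then the classes in
`Kˣ/Kˣ²` of the nonzero values `x² − d·y²` (`x, y ∈ K`) are exactly the classes of `1`
and of `−d`.  (The valuation is encoded via a decomposition `d = unit · π ^ n`, `n` odd;
"having class `1` or `−d`" is expressed as being of the form `z²` or `−d·z²`.) -/
theorem stmt_2 (R K : Type*) [CommRing R] [IsDomain R] [IsDiscreteValuationRing R]
    [HenselianLocalRing R] [Field K] [Algebra R K] [IsFractionRing R K]
    (h2 : (2 : IsLocalRing.ResidueField R) ≠ 0)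
    (π : R) (hπ : Irreducible π)
    (d : K) (u : Rˣ) (n : ℤ)
    (hd : d = algebraMap R K u * algebraMap R K π ^ n)
    (hn : Odd n) :
    {c : K | c ≠ 0 ∧ ∃ x y : K, x ^ 2 - d * y ^ 2 = c}
      = {c : K | c ≠ 0 ∧ ∃ z : K, c = z ^ 2 ∨ c = -(d * z ^ 2)} := by
  have hπK : algebraMap R K π ≠ 0 := by
    simpa [IsFractionRing.to_map_eq_zero_iff] using hπ.ne_zero
  ext c
  simp only [Set.mem_setOf_eq]
  constructor
  · rintro ⟨hc, x, y, hxy⟩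
    refine ⟨hc, ?_⟩
    by_cases hy : y = 0
    · exact ⟨x, Or.inl (by rw [← hxy, hy]; ring)⟩
    by_cases hx : x = 0
    · exact ⟨y, Or.inr (by rw [← hxy, hx]; ring)⟩
    -- both nonzero
    set q : K := y / x with hq
    have hq0 : q ≠ 0 := div_ne_zero hy hx
    obtain ⟨w, m, hw⟩ := aux_decomp hπ hq0
    have hdq : d * q ^ 2 = algebraMap R K ((u * w ^ 2 : Rˣ) : R)
        * algebraMap R K π ^ (n + 2 * m) := by
      rw [hd, hw]
      push_cast [map_mul, map_pow]
      rw [zpow_add₀ hπK]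
      rw [show (2 : ℤ) * m = m * 2 by ring, zpow_mul, zpow_two]
      push_cast
      ring
    have hM : Odd (n + 2 * m) := by
      rcases hn with ⟨k, hk⟩; exact ⟨k + m, by omega⟩
    have hM0 : n + 2 * m ≠ 0 := by
      rintro h; rw [h] at hM; simpa using hM
    rcases lt_or_gt_of_ne hM0 with hlt | hgt
    · -- n + 2m < 0 : c = -(d (y s)²)
      obtain ⟨s, hs⟩ := aux_one_sub_sq (K := K) h2 hπ (u * w ^ 2)⁻¹ (by omega : (0:ℤ) < -(n + 2 * m))
      have hinv : (d * q ^ 2)⁻¹ = algebraMap R K (((u * w ^ 2)⁻¹ : Rˣ) : R)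
          * algebraMap R K π ^ (-(n + 2 * m)) := by
        rw [hdq, mul_inv, map_units_inv, zpow_neg]
      rw [← hinv] at hs
      refine ⟨y * s, Or.inr ?_⟩
      have hdq0 : d * q ^ 2 ≠ 0 := by
        rw [hdq]
        refine mul_ne_zero ?_ (zpow_ne_zero _ hπK)
        simpa [IsFractionRing.to_map_eq_zero_iff (K := K)] using (u * w ^ 2).ne_zero
      have hd0 : d ≠ 0 := fun h => hdq0 (by rw [h]; ring)
      rw [← hxy]
      have hq2 : d * q ^ 2 = d * y ^ 2 / x ^ 2 := by rw [hq]; field_simp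
      have hinv2 : (d * q ^ 2)⁻¹ = x ^ 2 / (d * y ^ 2) := by rw [hq2, inv_div]
      have hys : (y * s) ^ 2 = y ^ 2 * s ^ 2 := by ring
      rw [hys, hs, hinv2]
      field_simp
      try ring
    · -- n + 2m > 0 : c = (x s)²
      obtain ⟨s, hs⟩ := aux_one_sub_sq (K := K) h2 hπ (u * w ^ 2) hgt
      rw [← hdq] at hs
      refine ⟨x * s, Or.inl ?_⟩
      rw [← hxy]
      have : (x * s) ^ 2 = x ^ 2 * s ^ 2 := by ring
      rw [this, hs, hq]
      field_simp
      try ring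
  · rintro ⟨hc, z, hz | hz⟩
    · exact ⟨hc, z, 0, by rw [hz]; ring⟩
    · exact ⟨hc, 0, z, by rw [hz]; ring⟩
end

section
/- Let R be a henselian discrete valuation ring with residue characteristic ≠ 2, K its fraction field with valuation v, and a, b, c ∈ K×. Suppose (i) v(a) and v(b) are both even, (ii) none of a, b, ab is a square in K, and (iii) v(c) is odd. Then the equation (X₁² − aY₁²)(X₂² − bY₂²)(X₃² − abY₃²) = c has no solution in K. -/
open IsLocalRing Polynomial

namespace Stmt4Aux

variable {R K : Type*} [CommRing R] [IsDomain R] [IsDiscreteValuationRing R]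
  [Field K] [Algebra R K] [IsFractionRing R K]

lemma map_pi_ne_zero {π : R} (hπ : Irreducible π) : algebraMap R K π ≠ 0 := fun h =>
  hπ.ne_zero ((map_eq_zero_iff _ (IsFractionRing.injective R K)).mp h)

lemma map_unit_ne_zero (w : Rˣ) : algebraMap R K ↑w ≠ 0 :=
  (w.isUnit.map (algebraMap R K)).ne_zero

lemma decomp {π : R} (hπ : Irreducible π) (x : K) (hx : x ≠ 0) :
    ∃ (w : Rˣ) (n : ℤ), x = algebraMap R K ↑w * algebraMap R K π ^ n := by
  obtain ⟨r, s, hs, rfl⟩ := IsFractionRing.div_surjective (A := R) x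
  have hp : algebraMap R K π ≠ 0 := map_pi_ne_zero hπ
  have hr : r ≠ 0 := by rintro rfl; simp at hx
  have hs0 : s ≠ 0 := nonZeroDivisors.ne_zero hs
  obtain ⟨m, u, rfl⟩ := IsDiscreteValuationRing.eq_unit_mul_pow_irreducible hr hπ
  obtain ⟨k, v, rfl⟩ := IsDiscreteValuationRing.eq_unit_mul_pow_irreducible hs0 hπ
  refine ⟨u * v⁻¹, (m : ℤ) - k, ?_⟩
  have h1 : algebraMap R K ↑v⁻¹ * algebraMap R K ↑v = 1 := by
    rw [← map_mul, Units.inv_mul, map_one]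
  have hv : (algebraMap R K) ↑v⁻¹ = ((algebraMap R K) ↑v)⁻¹ := eq_inv_of_mul_eq_one_left h1
  have hvne : algebraMap R K ↑v ≠ 0 := map_unit_ne_zero v
  simp only [Units.val_mul, map_mul, map_pow]
  rw [hv, zpow_sub₀ hp, zpow_natCast, zpow_natCast]
  ring

lemma exp_eq {π : R} (hπ : Irreducible π) (w w' : Rˣ) (m n : ℤ)
    (h : algebraMap R K ↑w * algebraMap R K π ^ m
        = algebraMap R K ↑w' * algebraMap R K π ^ n) : m = n := by
  have hp : algebraMap R K π ≠ 0 := map_pi_ne_zero hπ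
  set t : ℤ := ((m.natAbs + n.natAbs : ℕ) : ℤ) with ht
  have hm : 0 ≤ m + t := by omega
  have hn : 0 ≤ n + t := by omega
  have h2 : algebraMap R K ↑w * algebraMap R K π ^ (m + t)
      = algebraMap R K ↑w' * algebraMap R K π ^ (n + t) := by
    rw [zpow_add₀ hp, zpow_add₀ hp, ← mul_assoc, ← mul_assoc, h]
  have key : algebraMap R K (↑w * π ^ (m + t).toNat) = algebraMap R K (↑w' * π ^ (n + t).toNat) := by
    rw [map_mul, map_mul, map_pow, map_pow,
      ← zpow_natCast (algebraMap R K π) (m + t).toNat,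
      ← zpow_natCast (algebraMap R K π) (n + t).toNat,
      Int.toNat_of_nonneg hm, Int.toNat_of_nonneg hn, h2]
  have keyR := IsFractionRing.injective R K key
  have := IsDiscreteValuationRing.unit_mul_pow_congr_pow hπ hπ w w' _ _ keyR
  omega

/-- Even-valuation predicate. -/
def evenVal (π : R) (x : K) : Prop :=
  ∃ (w : Rˣ) (n : ℤ), Even n ∧ x = algebraMap R K ↑w * algebraMap R K π ^ n

lemma evenVal_mul {π : R} (hπ : Irreducible π) {x y : K}
    (hx : evenVal π x) (hy : evenVal π y) : evenVal π (x * y) := by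
  have hp : algebraMap R K π ≠ 0 := map_pi_ne_zero hπ
  obtain ⟨w, n, hn, rfl⟩ := hx
  obtain ⟨w', n', hn', rfl⟩ := hy
  exact ⟨w * w', n + n', hn.add hn', by rw [Units.val_mul, map_mul, zpow_add₀ hp]; ring⟩

lemma isUnit_of_residue_ne_zero {r : R} [IsLocalRing R] (h : residue R r ≠ 0) : IsUnit r := by
  by_contra hr
  exact h (Ideal.Quotient.eq_zero_iff_mem.mpr ((mem_maximalIdeal r).mpr (mem_nonunits_iff.mpr hr)))

lemma residue_unit_ne_zero [IsLocalRing R] (w : Rˣ) : residue R ↑w ≠ 0 :=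
  (w.isUnit.map (residue R)).ne_zero

lemma hensel_sq [HenselianLocalRing R] (h2 : (2 : ResidueField R) ≠ 0) (u : Rˣ)
    (t₀ : ResidueField R) (ht0 : t₀ ≠ 0) (ht : t₀ ^ 2 = residue R ↑u) :
    ∃ s : R, s ^ 2 = (u : R) := by
  obtain ⟨t, rfl⟩ := residue_surjective (R := R) t₀
  have hroot : (X ^ 2 - C (u : R)).eval t ∈ maximalIdeal R := by
    have h0 : residue R ((X ^ 2 - C (u : R)).eval t) = 0 := by
      rw [eval_sub, eval_pow, eval_X, eval_C, map_sub, map_pow, ht, sub_self]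
    exact Ideal.Quotient.eq_zero_iff_mem.mp h0
  have hderiv : IsUnit ((X ^ 2 - C (u : R)).derivative.eval t) := by
    have hd : (X ^ 2 - C (u : R)).derivative = C 2 * X := by
      simp [derivative_sub, derivative_X_pow]
      rw [one_add_one_eq_two]; exact (map_ofNat C 2).symm
    rw [hd]
    apply isUnit_of_residue_ne_zero
    have h1 : residue R ((C 2 * X : R[X]).eval t) = 2 * residue R t := by
      rw [eval_mul, eval_C, eval_X, map_mul, map_ofNat]
    rw [h1]
    exact mul_ne_zero h2 ht0
  obtain ⟨s, hs, -⟩ := HenselianLocalRing.is_henselian (X ^ 2 - C (u : R))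
    (monic_X_pow_sub_C _ (by norm_num)) t hroot hderiv
  refine ⟨s, ?_⟩
  have := hs
  simp only [IsRoot, eval_sub, eval_pow, eval_X, eval_C, sub_eq_zero] at this
  exact this


lemma residue_pi_eq_zero [IsLocalRing R] {π : R} (hπ : Irreducible π) : residue R π = 0 :=
  Ideal.Quotient.eq_zero_iff_mem.mpr ((mem_maximalIdeal π).mpr (mem_nonunits_iff.mpr hπ.not_isUnit))

lemma expr_eq {π : R} (hπ : Irreducible π) (uα w w' : Rˣ) (j k : ℤ) (hjk : j ≤ k)
    (X Z : K) (hX : X = algebraMap R K ↑w * algebraMap R K π ^ j)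
    (hZ : Z = algebraMap R K ↑w' * algebraMap R K π ^ k) :
    X ^ 2 - algebraMap R K ↑uα * Z ^ 2
      = algebraMap R K (↑(w ^ 2) - ↑uα * ↑(w' ^ 2) * (π ^ (k - j).toNat) ^ 2)
          * algebraMap R K π ^ (j + j) := by
  have hp : algebraMap R K π ≠ 0 := map_pi_ne_zero hπ
  have hq : algebraMap R K π ^ k
      = algebraMap R K π ^ j * algebraMap R K (π ^ (k - j).toNat) := by
    rw [map_pow, ← zpow_natCast (algebraMap R K π) (k - j).toNat, ← zpow_add₀ hp]
    congr 1
    omega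
  rw [hX, hZ, hq, zpow_add₀ hp]
  simp only [map_sub, map_mul, map_pow, Units.val_pow_eq_pow_val]
  ring

lemma expr_eq' {π : R} (hπ : Irreducible π) (uα w w' : Rˣ) (j k : ℤ) (hjk : k ≤ j)
    (X Z : K) (hX : X = algebraMap R K ↑w * algebraMap R K π ^ j)
    (hZ : Z = algebraMap R K ↑w' * algebraMap R K π ^ k) :
    X ^ 2 - algebraMap R K ↑uα * Z ^ 2
      = algebraMap R K (↑(w ^ 2) * (π ^ (j - k).toNat) ^ 2 - ↑uα * ↑(w' ^ 2))
          * algebraMap R K π ^ (k + k) := by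
  have hp : algebraMap R K π ≠ 0 := map_pi_ne_zero hπ
  have hq : algebraMap R K π ^ j
      = algebraMap R K π ^ k * algebraMap R K (π ^ (j - k).toNat) := by
    rw [map_pow, ← zpow_natCast (algebraMap R K π) (j - k).toNat, ← zpow_add₀ hp]
    congr 1
    omega
  rw [hX, hZ, hq, zpow_add₀ hp]
  simp only [map_sub, map_mul, map_pow, Units.val_pow_eq_pow_val]
  ring

lemma factor_even [HenselianLocalRing R] {π : R} (hπ : Irreducible π)
    (h2 : (2 : ResidueField R) ≠ 0)
    (α : K) (uα : Rˣ) (m : ℤ)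
    (hα : α = algebraMap R K ↑uα * algebraMap R K π ^ (m + m))
    (hαsq : ¬ IsSquare α) (X Y : K) (hne : X ^ 2 - α * Y ^ 2 ≠ 0) :
    evenVal π (X ^ 2 - α * Y ^ 2) := by
  have hp : algebraMap R K π ≠ 0 := map_pi_ne_zero hπ
  have hππ : residue R π = 0 := residue_pi_eq_zero hπ
  set Z : K := algebraMap R K π ^ m * Y with hZdef
  have hZ2 : α * Y ^ 2 = algebraMap R K ↑uα * Z ^ 2 := by
    rw [hα, hZdef, zpow_add₀ hp]; ring
  rw [hZ2] at hne ⊢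
  by_cases hZ0 : Z = 0
  · -- X ^ 2 case
    have hX : X ≠ 0 := by
      intro h; apply hne; rw [h, hZ0]; ring
    obtain ⟨w, n, hXd⟩ := decomp hπ X hX
    refine ⟨w ^ 2, n + n, ⟨n, rfl⟩, ?_⟩
    rw [hXd, hZ0, zpow_add₀ hp]
    simp only [Units.val_pow_eq_pow_val, map_pow]
    ring
  by_cases hX0 : X = 0
  · obtain ⟨w, n, hZd⟩ := decomp hπ Z hZ0
    refine ⟨-(uα * w ^ 2), n + n, ⟨n, rfl⟩, ?_⟩
    rw [hX0, hZd, zpow_add₀ hp]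
    simp only [Units.val_neg, Units.val_mul, Units.val_pow_eq_pow_val, map_neg, map_mul, map_pow]
    ring
  obtain ⟨w, j, hXd⟩ := decomp hπ X hX0
  obtain ⟨w', k, hZd⟩ := decomp hπ Z hZ0
  rcases le_or_gt j k with hjk | hjk
  · -- j ≤ k
    set d : ℕ := (k - j).toNat with hd
    set r : R := ↑(w ^ 2) - ↑uα * ↑(w' ^ 2) * (π ^ d) ^ 2 with hr
    have hexpr := expr_eq hπ uα w w' j k hjk X Z hXd hZd
    by_cases hru : IsUnit r
    · exact ⟨hru.unit, j + j, ⟨j, rfl⟩, by rw [hexpr, hru.unit_spec]⟩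
    · exfalso
      have hres : residue R r = 0 :=
        Ideal.Quotient.eq_zero_iff_mem.mpr ((mem_maximalIdeal r).mpr (mem_nonunits_iff.mpr hru))
      by_cases hd0 : d = 0
      · -- Hensel case
        apply hαsq
        have hres' : (residue R ↑w) ^ 2 = residue R ↑uα * (residue R ↑w') ^ 2 := by
          have : residue R r
              = (residue R ↑w) ^ 2 - residue R ↑uα * (residue R ↑w') ^ 2 := by
            rw [hr, hd0]
            simp only [map_sub, map_mul, map_pow, Units.val_pow_eq_pow_val, pow_zero, one_pow,
              mul_one]
          rw [this, sub_eq_zero] at hres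
          exact hres
        have hw' : residue R ↑w' ≠ 0 := residue_unit_ne_zero w'
        have ht0 : residue R ↑w * (residue R ↑w')⁻¹ ≠ 0 :=
          mul_ne_zero (residue_unit_ne_zero w) (inv_ne_zero hw')
        have ht : (residue R ↑w * (residue R ↑w')⁻¹) ^ 2 = residue R ↑uα := by
          field_simp
          exact hres'.trans (mul_comm _ _)
        obtain ⟨s, hs⟩ := hensel_sq h2 uα _ ht0 ht
        refine ⟨algebraMap R K s * algebraMap R K π ^ m, ?_⟩
        rw [hα, ← hs, map_pow, zpow_add₀ hp]
        ring
      · -- d ≠ 0 : residue r = residue (w^2) ≠ 0, contradiction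
        apply residue_unit_ne_zero (R := R) (w ^ 2)
        have : residue R r = residue R ↑(w ^ 2) := by
          rw [hr]
          simp only [map_sub, map_mul, map_pow, hππ, zero_pow hd0, ne_eq, OfNat.ofNat_ne_zero,
            not_false_eq_true, zero_pow, mul_zero, sub_zero]
        rw [← this, hres]
  · -- k < j
    set e : ℕ := (j - k).toNat with he
    have he0 : e ≠ 0 := by omega
    set r : R := ↑(w ^ 2) * (π ^ e) ^ 2 - ↑uα * ↑(w' ^ 2) with hr
    have hexpr := expr_eq' hπ uα w w' j k hjk.le X Z hXd hZd
    have hru : IsUnit r := by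
      apply isUnit_of_residue_ne_zero
      have : residue R r = -(residue R ↑uα * residue R ↑(w' ^ 2)) := by
        rw [hr]
        simp only [map_sub, map_mul, map_pow, hππ, zero_pow he0, ne_eq, OfNat.ofNat_ne_zero,
          not_false_eq_true, zero_pow, mul_zero, zero_mul, zero_sub]
      rw [this]
      exact neg_ne_zero.mpr
        (mul_ne_zero (residue_unit_ne_zero uα) (residue_unit_ne_zero (w' ^ 2)))
    exact ⟨hru.unit, k + k, ⟨k, rfl⟩, by rw [hexpr, hru.unit_spec]⟩

end Stmt4Aux

/-- Let `R` be a henselian discrete valuation ring with residue characteristic ≠ 2, `K` its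
fraction field with valuation `v`, and `a, b, c ∈ Kˣ`. Suppose (i) `v(a)` and `v(b)` are both
even, (ii) none of `a`, `b`, `ab` is a square in `K`, and (iii) `v(c)` is odd. Then the
equation `(X₁² − aY₁²)(X₂² − bY₂²)(X₃² − abY₃²) = c` has no solution in `K`.
(Valuations are encoded via decompositions `unit · π ^ n` for a uniformizer `π`.) -/
theorem stmt_4 (R K : Type*) [CommRing R] [IsDomain R] [IsDiscreteValuationRing R]
    [HenselianLocalRing R] [Field K] [Algebra R K] [IsFractionRing R K]
    (h2 : (2 : IsLocalRing.ResidueField R) ≠ 0)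
    (π : R) (hπ : Irreducible π)
    (a b c : K) (ua ub uc : Rˣ) (na nb nc : ℤ)
    (ha : a = algebraMap R K ua * algebraMap R K π ^ na)
    (hb : b = algebraMap R K ub * algebraMap R K π ^ nb)
    (hc : c = algebraMap R K uc * algebraMap R K π ^ nc)
    (hna : Even na) (hnb : Even nb)
    (hasq : ¬ IsSquare a) (hbsq : ¬ IsSquare b) (habsq : ¬ IsSquare (a * b))
    (hnc : Odd nc) :
    ¬ ∃ X1 Y1 X2 Y2 X3 Y3 : K,
        (X1 ^ 2 - a * Y1 ^ 2) * (X2 ^ 2 - b * Y2 ^ 2) * (X3 ^ 2 - a * b * Y3 ^ 2) = c := by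
  open Stmt4Aux in
  rintro ⟨X1, Y1, X2, Y2, X3, Y3, heq⟩
  have hp : algebraMap R K π ≠ 0 := map_pi_ne_zero hπ
  have hc0 : c ≠ 0 := by
    rw [hc]; exact mul_ne_zero (map_unit_ne_zero uc) (zpow_ne_zero _ hp)
  have hprod : (X1 ^ 2 - a * Y1 ^ 2) * (X2 ^ 2 - b * Y2 ^ 2) * (X3 ^ 2 - a * b * Y3 ^ 2) ≠ 0 := by
    rw [heq]; exact hc0
  obtain ⟨h12, h3⟩ := mul_ne_zero_iff.mp hprod
  obtain ⟨h1, hf2⟩ := mul_ne_zero_iff.mp h12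
  obtain ⟨m, hm⟩ := hna
  obtain ⟨m', hm'⟩ := hnb
  have ha' : a = algebraMap R K ↑ua * algebraMap R K π ^ (m + m) := by rw [ha, hm]
  have hb' : b = algebraMap R K ↑ub * algebraMap R K π ^ (m' + m') := by rw [hb, hm']
  have hab' : a * b
      = algebraMap R K ↑(ua * ub) * algebraMap R K π ^ ((m + m') + (m + m')) := by
    rw [ha', hb']
    simp only [Units.val_mul, map_mul]
    rw [zpow_add₀ hp m m, zpow_add₀ hp m' m', zpow_add₀ hp (m + m') (m + m'),
      zpow_add₀ hp m m']
    ring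
  have ev1 := factor_even hπ h2 a ua m ha' hasq X1 Y1 h1
  have ev2 := factor_even hπ h2 b ub m' hb' hbsq X2 Y2 hf2
  have ev3 := factor_even hπ h2 (a * b) (ua * ub) (m + m') hab' habsq X3 Y3 h3
  have evc : evenVal π c := by
    rw [← heq]; exact evenVal_mul hπ (evenVal_mul hπ ev1 ev2) ev3
  obtain ⟨w, n, hn, hcw⟩ := evc
  have hn_eq : n = nc := exp_eq hπ w uc n nc (hcw.symm.trans hc)
  obtain ⟨e, he⟩ := hn
  obtain ⟨o, ho⟩ := hnc
  omega
end

section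
/- Let R be a regular local ring of dimension 2 with regular system of parameters π, δ, fraction field K, and maximal ideal m. Suppose z ∈ R is nonzero, its divisor is supported on the union of the divisors of π and δ, and z is a square in the fraction field of the henselization of the localization of R at the prime (π). Then z = u·π^{2r}·δ^{2s} in K with u ∈ R× whose image in R/(π) is a square; in particular the image of u in R/m is a square. -/
private lemma fin_aux {A : Type*} [CommRing A] [IsDomain A] [IsNoetherianRing A]
    {p x : A} (hp : ¬ IsUnit p) (hx : x ≠ 0) : ∃ n, ¬ p ^ n ∣ x := by
  by_contra h
  push_neg at h
  have hI : Ideal.span {p} ≠ ⊤ := by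
    simpa [Ideal.span_singleton_eq_top] using hp
  have hbot : (⨅ n : ℕ, Ideal.span {p} ^ n) = ⊥ :=
    Ideal.iInf_pow_eq_bot_of_isDomain _ hI
  apply hx
  have : x ∈ (⨅ n : ℕ, Ideal.span {p} ^ n) := by
    refine Ideal.mem_iInf.mpr fun n => ?_
    rw [Ideal.span_singleton_pow]
    exact Ideal.mem_span_singleton.mpr (h n)
  rwa [hbot, Ideal.mem_bot] at this

private lemma exp_lt_aux {A : Type*} [CommRing A] [IsDomain A] {p : A} (hp : Prime p)
    {u v : A} (hu : IsUnit u) {i j : ℕ}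
    (h : u * p ^ i = v * p ^ j) (hij : i < j) : False := by
  have hpow : (p : A) ^ i ≠ 0 := pow_ne_zero _ hp.ne_zero
  have h2 : u = v * p ^ (j - i) := by
    apply mul_right_cancel₀ hpow
    rw [h, mul_assoc, ← pow_add, Nat.sub_add_cancel hij.le]
  have hd : p ∣ u := by
    refine dvd_trans (dvd_pow_self p (Nat.sub_ne_zero_of_lt hij)) ?_
    rw [h2]; exact dvd_mul_left _ _
  exact hp.not_unit (isUnit_of_dvd_unit hd hu)

private lemma exp_eq_aux {A : Type*} [CommRing A] [IsDomain A] {p : A} (hp : Prime p)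
    {u v : A} (hu : IsUnit u) (hv : IsUnit v) {i j : ℕ}
    (h : u * p ^ i = v * p ^ j) : i = j := by
  rcases lt_trichotomy i j with hlt | heq | hlt
  · exact absurd (exp_lt_aux hp hu h hlt) not_false
  · exact heq
  · exact absurd (exp_lt_aux hp hv h.symm hlt) not_false

/-- Key lemma: in a domain where non-multiples of a prime `p` are units (and `p`-adic
multiplicity is finite), if `c * p ^ b` is a square in the fraction field with `c` a unit,
then `b` is even and `c` is a square. -/
private lemma main_aux {A K : Type*} [CommRing A] [IsDomain A] [Field K] [Algebra A K]
    [IsFractionRing A K] {p : A} (hp : Prime p)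
    (hfin : ∀ x : A, x ≠ 0 → ∃ n, ¬ p ^ n ∣ x)
    (hloc : ∀ x : A, x ≠ 0 → ¬ p ∣ x → IsUnit x)
    {c : A} (hc : IsUnit c) (b : ℕ)
    (hsq : IsSquare (algebraMap A K (c * p ^ b))) :
    Even b ∧ IsSquare c := by
  classical
  obtain ⟨t, ht⟩ := hsq
  obtain ⟨x, y, hy, hxy⟩ := IsFractionRing.div_surjective (A := A) t
  have hy0 : y ≠ 0 := nonZeroDivisors.ne_zero hy
  have hyK : algebraMap A K y ≠ 0 := by
    simpa using fun h => hy0 (IsFractionRing.injective A K (by simpa using h))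
  have htx : t * algebraMap A K y = algebraMap A K x := by
    rw [← hxy, div_mul_cancel₀ _ hyK]
  rw [← hxy, div_mul_div_comm, eq_div_iff (mul_ne_zero hyK hyK)] at ht
  have key : c * p ^ b * (y * y) = x * x := by
    apply IsFractionRing.injective A K
    simp only [map_mul] at ht ⊢
    linear_combination ht
  have hx0 : x ≠ 0 := by
    intro h
    rw [h, mul_zero] at key
    rcases mul_eq_zero.mp key with h1 | h1
    · rcases mul_eq_zero.mp h1 with h2 | h2
      · exact hc.ne_zero h2
      · exact pow_ne_zero b hp.ne_zero h2
    · exact hy0 (mul_self_eq_zero.mp h1)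
  -- decompose elements into unit * power of p
  have hdecomp : ∀ w : A, w ≠ 0 → ∃ (k : ℕ) (w' : A), IsUnit w' ∧ w = p ^ k * w' := by
    intro w hw
    have hex : ∃ n, ¬ p ^ n ∣ w := hfin w hw
    have hk0 : Nat.find hex ≠ 0 := by
      intro h
      apply Nat.find_spec hex
      rw [h, pow_zero]
      exact one_dvd w
    have hdvd : p ^ (Nat.find hex - 1) ∣ w :=
      not_not.mp (Nat.find_min hex (Nat.sub_lt (Nat.pos_of_ne_zero hk0) one_pos))
    obtain ⟨w', hw'⟩ := hdvd
    have hpw' : ¬ p ∣ w' := by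
      rintro ⟨w'', hw''⟩
      apply Nat.find_spec hex
      refine ⟨w'', ?_⟩
      calc w = p ^ (Nat.find hex - 1) * (p * w'') := by rw [← hw'', ← hw']
        _ = p ^ (Nat.find hex - 1 + 1) * w'' := by rw [pow_succ]; ring
        _ = p ^ Nat.find hex * w'' := by
            rw [Nat.sub_add_cancel (Nat.one_le_iff_ne_zero.mpr hk0)]
    have hw'0 : w' ≠ 0 := by rintro rfl; rw [mul_zero] at hw'; exact hw hw'
    exact ⟨Nat.find hex - 1, w', hloc w' hw'0 hpw', hw'⟩
  obtain ⟨k, x', hx'u, hxeq⟩ := hdecomp x hx0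
  obtain ⟨l, y', hy'u, hyeq⟩ := hdecomp y hy0
  rw [hxeq, hyeq] at key
  have eq2 : (c * (y' * y')) * p ^ (b + (l + l)) = (x' * x') * p ^ (k + k) := by
    rw [pow_add, pow_add, pow_add]
    linear_combination key
  have hexp : b + (l + l) = k + k :=
    exp_eq_aux hp (hc.mul (hy'u.mul hy'u)) (hx'u.mul hx'u) eq2
  have hbeven : Even b := by
    have h1 : Even (b + (l + l)) := by rw [hexp]; exact ⟨k, rfl⟩
    rcases Nat.even_add.mp h1 with h2
    exact h2.mpr ⟨l, rfl⟩
  refine ⟨hbeven, ?_⟩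
  have h3 : c * (y' * y') = x' * x' := by
    have hpowne : (p : A) ^ (b + (l + l)) ≠ 0 := pow_ne_zero _ hp.ne_zero
    apply mul_right_cancel₀ hpowne
    rw [eq2, hexp]
  set yu := hy'u.unit with hyu
  have hyuv : (yu : A) = y' := hy'u.unit_spec
  refine ⟨x' * ↑yu⁻¹, ?_⟩
  have hinv : (y' : A) * ↑yu⁻¹ = 1 := by rw [← hyuv]; exact yu.mul_inv
  calc c = c * ((y' * ↑yu⁻¹) * (y' * ↑yu⁻¹)) := by rw [hinv]; ring
    _ = (c * (y' * y')) * (↑yu⁻¹ * ↑yu⁻¹) := by ring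
    _ = (x' * x') * (↑yu⁻¹ * ↑yu⁻¹) := by rw [h3]
    _ = (x' * ↑yu⁻¹) * (x' * ↑yu⁻¹) := by ring

/-- Squares in the fraction field of a ring whose nonzero elements are units pull back. -/
private lemma sq_pullback {A K : Type*} [CommRing A] [IsDomain A] [Field K] [Algebra A K]
    [IsFractionRing A K] (hunits : ∀ x : A, x ≠ 0 → IsUnit x)
    {e : A} (h : IsSquare (algebraMap A K e)) : IsSquare e := by
  obtain ⟨t, ht⟩ := h
  obtain ⟨x, y, hy, hxy⟩ := IsFractionRing.div_surjective (A := A) t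
  have hy0 : y ≠ 0 := nonZeroDivisors.ne_zero hy
  have hyK : algebraMap A K y ≠ 0 := by
    simpa using fun h => hy0 (IsFractionRing.injective A K (by simpa using h))
  set yu := (hunits y hy0).unit with hyu
  have hyuv : (yu : A) = y := (hunits y hy0).unit_spec
  have hxsimp : (x : A) * ↑yu⁻¹ * y = x := by
    rw [mul_assoc, ← hyuv, Units.inv_mul, mul_one]
  have htx : t = algebraMap A K (x * ↑yu⁻¹) := by
    apply mul_right_cancel₀ hyK
    rw [← hxy, div_mul_cancel₀ _ hyK, ← map_mul, hxsimp]
  refine ⟨x * ↑yu⁻¹, IsFractionRing.injective A K ?_⟩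
  rw [ht, htx, ← map_mul]

/-- Let `R` be a regular local ring of dimension 2 with regular system of parameters `π, δ`,
fraction field `K`, and maximal ideal `m`. Suppose `z ∈ R` is nonzero, its divisor is
supported on the union of the divisors of `π` and `δ` (i.e. `z = u₀·π^a·δ^b` with `u₀` a
unit), and `z` is a square in the fraction field of the henselization of the localization
of `R` at the prime `(π)`. Then `z = u·π^{2r}·δ^{2s}` with `u ∈ Rˣ` whose image in `R/(π)`
is a square; in particular the image of `u` in `R/m` is a square.

The henselization of `R_{(π)}` is abstracted as a henselian discrete valuation ring `S`
under `R` in which `π` becomes a uniformizer and whose residue field is the fraction field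
of `R/(π)` (compatibly with reduction); `FS` is its fraction field. -/
theorem stmt_11 (R : Type*) [CommRing R] [IsDomain R] [IsNoetherianRing R] [IsLocalRing R]
    (π δ : R) (hπ : Prime π) (hδ : Prime δ)
    (hm : IsLocalRing.maximalIdeal R = Ideal.span {π, δ})
    (z : R) (hz : z ≠ 0)
    (u₀ : Rˣ) (a b : ℕ) (hsupp : z = (u₀ : R) * π ^ a * δ ^ b)
    -- `S` is the henselization of the localization of `R` at `(π)`:
    (S : Type*) [CommRing S] [IsDomain S] [IsDiscreteValuationRing S] [HenselianLocalRing S]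
    [Algebra R S] (hinj : Function.Injective (algebraMap R S))
    (hunif : Irreducible (algebraMap R S π))
    [IsDomain (R ⧸ Ideal.span {π})]
    [Algebra (R ⧸ Ideal.span {π}) (IsLocalRing.ResidueField S)]
    [IsFractionRing (R ⧸ Ideal.span {π}) (IsLocalRing.ResidueField S)]
    (hcomp : ∀ x : R, IsLocalRing.residue S (algebraMap R S x)
      = algebraMap (R ⧸ Ideal.span {π}) (IsLocalRing.ResidueField S)
          (Ideal.Quotient.mk (Ideal.span {π}) x))
    (FS : Type*) [Field FS] [Algebra S FS] [IsFractionRing S FS]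
    [Algebra R FS] [IsScalarTower R S FS]
    (hsq : IsSquare (algebraMap R FS z)) :
    ∃ (u : Rˣ) (r s : ℕ),
      z = (u : R) * π ^ (2 * r) * δ ^ (2 * s) ∧
      IsSquare (Ideal.Quotient.mk (Ideal.span {π}) (u : R)) ∧
      IsSquare (IsLocalRing.residue R (u : R)) := by
  classical
  have hIle : (Ideal.span {π}) ≤ IsLocalRing.maximalIdeal R := by
    rw [hm]
    exact Ideal.span_mono (by intro x hx; simp_all)
  -- the factor map R⧸(Ideal.span {π}) → R⧸m sends mk (Ideal.span {π}) to residue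
  have hfactor : ∀ w : R, IsSquare (Ideal.Quotient.mk (Ideal.span {π}) w) → IsSquare (IsLocalRing.residue R w) := by
    intro w hw
    have := hw.map (Ideal.Quotient.factor hIle)
    rwa [Ideal.Quotient.factor_mk] at this
  -- S-side facts
  have hπS : Prime (algebraMap R S π) :=
    UniqueFactorizationMonoid.irreducible_iff_prime.mp hunif
  have hfinS : ∀ x : S, x ≠ 0 → ∃ n, ¬ (algebraMap R S π) ^ n ∣ x :=
    fun x hx => fin_aux hunif.not_isUnit hx
  have hmaxS : IsLocalRing.maximalIdeal S = Ideal.span {algebraMap R S π} :=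
    (IsDiscreteValuationRing.irreducible_iff_uniformizer _).mp hunif
  have hlocS : ∀ x : S, x ≠ 0 → ¬ algebraMap R S π ∣ x → IsUnit x := by
    intro x hx hdvd
    by_contra hu
    exact hdvd (Ideal.mem_span_singleton.mp
      (hmaxS ▸ (IsLocalRing.mem_maximalIdeal x).mpr hu))
  by_cases hd : δ ∈ (Ideal.span {π})
  · -- degenerate case: δ = π * c with c a unit
    obtain ⟨c, hcδ⟩ := Ideal.mem_span_singleton.mp hd
    have hcu : IsUnit c := by
      rcases hδ.irreducible.isUnit_or_isUnit hcδ with h | h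
      · exact absurd h hπ.not_unit
      · exact h
    set cu := hcu.unit with hcudef
    have hcuv : (cu : R) = c := hcu.unit_spec
    -- z = (u₀ * c^b) * π^(a+b)
    have hzS : algebraMap R S z =
        algebraMap R S ((u₀ : R) * c ^ b) * (algebraMap R S π) ^ (a + b) := by
      rw [← map_pow, ← map_mul]
      congr 1
      rw [hsupp, hcδ]
      ring
    have hcS : IsUnit (algebraMap R S ((u₀ : R) * c ^ b)) := by
      rw [map_mul, map_pow]
      exact (u₀.isUnit.map (algebraMap R S)).mul ((hcu.map (algebraMap R S)).pow b)
    have hsq' : IsSquare (algebraMap S FS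
        (algebraMap R S ((u₀ : R) * c ^ b) * (algebraMap R S π) ^ (a + b))) := by
      rw [← hzS, ← IsScalarTower.algebraMap_apply]
      exact hsq
    obtain ⟨hEab, hsqS⟩ := main_aux hπS hfinS hlocS hcS (a + b) hsq'
    -- push square down to R⧸(Ideal.span {π})
    have hsqK' : IsSquare (algebraMap (R ⧸ (Ideal.span {π})) (IsLocalRing.ResidueField S)
        (Ideal.Quotient.mk (Ideal.span {π}) ((u₀ : R) * c ^ b))) := by
      rw [← hcomp]
      exact hsqS.map (IsLocalRing.residue S)
    -- R⧸(Ideal.span {π}) has all nonzero elements units (since m ≤ (Ideal.span {π}) here)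
    have hmle : IsLocalRing.maximalIdeal R ≤ (Ideal.span {π}) := by
      rw [hm]
      apply Ideal.span_le.mpr
      intro x hx
      rcases hx with h | h
      · subst h; exact Ideal.subset_span rfl
      · simp only [Set.mem_singleton_iff] at h; subst h; exact hd
    have hunits : ∀ x : R ⧸ (Ideal.span {π}), x ≠ 0 → IsUnit x := by
      intro x hx
      obtain ⟨y, rfl⟩ := Ideal.Quotient.mk_surjective x
      by_contra hu
      have hy : y ∈ IsLocalRing.maximalIdeal R := by
        rw [IsLocalRing.mem_maximalIdeal, mem_nonunits_iff]
        intro hyu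
        exact hu (hyu.map _)
      exact hx (Ideal.Quotient.eq_zero_iff_mem.mpr (hmle hy))
    have hsqI : IsSquare (Ideal.Quotient.mk (Ideal.span {π}) ((u₀ : R) * c ^ b)) :=
      sq_pullback hunits hsqK'
    obtain ⟨r, hr⟩ := hEab
    refine ⟨u₀ * cu ^ b, r, 0, ?_, ?_, ?_⟩
    · have : ((u₀ * cu ^ b : Rˣ) : R) = (u₀ : R) * c ^ b := by
        rw [Units.val_mul, Units.val_pow_eq_pow_val, hcuv]
      rw [this, hsupp, hcδ, pow_zero, mul_one]
      rw [show 2 * r = a + b by omega]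
      ring
    · have : ((u₀ * cu ^ b : Rˣ) : R) = (u₀ : R) * c ^ b := by
        rw [Units.val_mul, Units.val_pow_eq_pow_val, hcuv]
      rw [this]
      exact hsqI
    · have : ((u₀ * cu ^ b : Rˣ) : R) = (u₀ : R) * c ^ b := by
        rw [Units.val_mul, Units.val_pow_eq_pow_val, hcuv]
      rw [this]
      exact hfactor _ (by rw [← this]; rw [this]; exact hsqI)
  · -- main case: δ ∉ (π), so δ is a unit in S and a prime in R⧸(Ideal.span {π})
    have hδ0 : Ideal.Quotient.mk (Ideal.span {π}) δ ≠ 0 := fun h => hd (Ideal.Quotient.eq_zero_iff_mem.mp h)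
    have hδS : IsUnit (algebraMap R S δ) := by
      by_contra hu
      have hmem : algebraMap R S δ ∈ IsLocalRing.maximalIdeal S :=
        (IsLocalRing.mem_maximalIdeal _).mpr hu
      have h0 : IsLocalRing.residue S (algebraMap R S δ) = 0 :=
        Ideal.Quotient.eq_zero_iff_mem.mpr hmem
      rw [hcomp] at h0
      exact hδ0 ((map_eq_zero_iff _
        (IsFractionRing.injective (R ⧸ (Ideal.span {π})) (IsLocalRing.ResidueField S))).mp h0)
    have hcS : IsUnit (algebraMap R S ((u₀ : R) * δ ^ b)) := by
      rw [map_mul, map_pow]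
      exact (u₀.isUnit.map (algebraMap R S)).mul (hδS.pow b)
    have hzS : algebraMap R S z =
        algebraMap R S ((u₀ : R) * δ ^ b) * (algebraMap R S π) ^ a := by
      rw [← map_pow, ← map_mul]
      congr 1
      rw [hsupp]
      ring
    have hsq' : IsSquare (algebraMap S FS
        (algebraMap R S ((u₀ : R) * δ ^ b) * (algebraMap R S π) ^ a)) := by
      rw [← hzS, ← IsScalarTower.algebraMap_apply]
      exact hsq
    obtain ⟨hEa, hsqS⟩ := main_aux hπS hfinS hlocS hcS a hsq'
    -- push down to R⧸(Ideal.span {π})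
    have hsqK' : IsSquare (algebraMap (R ⧸ (Ideal.span {π})) (IsLocalRing.ResidueField S)
        (Ideal.Quotient.mk (Ideal.span {π}) (u₀ : R) * (Ideal.Quotient.mk (Ideal.span {π}) δ) ^ b)) := by
      rw [← map_pow, ← map_mul, ← hcomp]
      exact hsqS.map (IsLocalRing.residue S)
    -- the image of m in R⧸(Ideal.span {π}) is span {mk δ}
    have hmapm : (IsLocalRing.maximalIdeal R).map (Ideal.Quotient.mk (Ideal.span {π})) =
        Ideal.span {Ideal.Quotient.mk (Ideal.span {π}) δ} := by
      rw [hm, Ideal.map_span]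
      have hπ0 : Ideal.Quotient.mk (Ideal.span {π}) π = 0 :=
        Ideal.Quotient.eq_zero_iff_mem.mpr (Ideal.subset_span rfl)
      rw [Set.image_insert_eq, Set.image_singleton, hπ0, Ideal.span_insert,
        Ideal.span_singleton_eq_bot.mpr rfl, bot_sup_eq]
    have hprime : Prime (Ideal.Quotient.mk (Ideal.span {π}) δ) := by
      rw [← Ideal.span_singleton_prime hδ0, ← hmapm]
      exact Ideal.map_isPrime_of_surjective Ideal.Quotient.mk_surjective
        (by rw [Ideal.mk_ker]; exact hIle)
    have hlocA : ∀ x : R ⧸ (Ideal.span {π}), x ≠ 0 → ¬ Ideal.Quotient.mk (Ideal.span {π}) δ ∣ x → IsUnit x := by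
      intro x hx hdvd
      obtain ⟨y, rfl⟩ := Ideal.Quotient.mk_surjective x
      by_contra hu
      have hy : y ∈ IsLocalRing.maximalIdeal R := by
        rw [IsLocalRing.mem_maximalIdeal, mem_nonunits_iff]
        intro hyu
        exact hu (hyu.map _)
      exact hdvd (Ideal.mem_span_singleton.mp (hmapm ▸ Ideal.mem_map_of_mem _ hy))
    have hfinA : ∀ x : R ⧸ (Ideal.span {π}), x ≠ 0 → ∃ n, ¬ (Ideal.Quotient.mk (Ideal.span {π}) δ) ^ n ∣ x :=
      fun x hx => fin_aux hprime.not_unit hx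
    have hcA : IsUnit (Ideal.Quotient.mk (Ideal.span {π}) (u₀ : R)) := u₀.isUnit.map _
    obtain ⟨hEb, hsqI⟩ := main_aux hprime hfinA hlocA hcA b hsqK'
    obtain ⟨r, hr⟩ := hEa
    obtain ⟨s, hs⟩ := hEb
    refine ⟨u₀, r, s, ?_, hsqI, hfactor _ hsqI⟩
    rw [hsupp, show 2 * r = a by omega, show 2 * s = b by omega]
end

section
/- Let F be a field with char F ≠ 2 in which −1 is a square and such that for every finite extension ℓ/F the group ℓ×/ℓ×² has at most 2 elements. Then for every closed point γ of the projective line P¹_F with function field K = F(x), at least one of x, x+1, x(x+1) is a square in the henselization (equivalently, completion) K_γ of K at γ. -/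
open IsLocalRing Polynomial

/-- Hensel lifting of square roots: in a henselian local ring in which `2` has nonzero
residue, any element whose residue is a nonzero square is itself a square. -/
lemma hensel_sq {R : Type} [CommRing R] [HenselianLocalRing R]
    (h2 : residue R 2 ≠ 0) (α : R) (hs : IsSquare (residue R α))
    (hne : residue R α ≠ 0) : ∃ β : R, β * β = α := by
  obtain ⟨s, hs⟩ := hs
  obtain ⟨r₀, hr₀⟩ := residue_surjective (R := R) s
  have hsne : s ≠ 0 := by
    intro h
    apply hne
    rw [hs, h, mul_zero]
  have hmem : (X ^ 2 - C α).eval r₀ ∈ maximalIdeal R := by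
    have hz : residue R ((X ^ 2 - C α).eval r₀) = 0 := by
      simp only [eval_sub, eval_pow, eval_X, eval_C, map_sub, map_pow, hr₀, hs]
      ring
    exact Ideal.Quotient.eq_zero_iff_mem.mp hz
  have hder : IsUnit ((X ^ 2 - C α).derivative.eval r₀) := by
    rw [← residue_ne_zero_iff_isUnit]
    have hd : (X ^ 2 - C α).derivative.eval r₀ = 2 * r₀ := by
      simp [derivative_sub, derivative_X_pow, one_add_one_eq_two]
    rw [hd, map_mul, hr₀]
    exact mul_ne_zero h2 hsne
  obtain ⟨a, ha, -⟩ := HenselianLocalRing.is_henselian (X ^ 2 - C α)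
    (monic_X_pow_sub_C α two_ne_zero) r₀ hmem hder
  refine ⟨a, ?_⟩
  have := ha
  simp only [IsRoot, eval_sub, eval_pow, eval_X, eval_C, sub_eq_zero] at this
  rw [← this]; ring

/-- Let `F` be a field with `char F ≠ 2` in which `−1` is a square and such that for every
finite extension `ℓ/F` the group `ℓˣ/ℓˣ²` has at most 2 elements (expressed: among any
three nonzero elements of `ℓ`, two have a square product). Then for every closed point `γ`
of the projective line `ℙ¹_F` with function field `K = F(x)`, at least one of `x`, `x+1`,
`x(x+1)` is a square in the henselization (equivalently, completion) `K_γ` of `K` at `γ`.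

The local field `K_γ` at the closed point `γ` is abstracted as a field `Kγ` equipped with
an embedding `f : F(x) → Kγ` and a henselian discrete valuation subring `O` with fraction
field `Kγ`, such that the valuation is trivial on `F` (constants are units of `O`) and the
residue field of `O` is a finite extension of `F` (this is what it means for `γ` to be a
closed point). -/
theorem stmt_14 (F : Type) [Field F] (h2 : (2 : F) ≠ 0) (hneg : IsSquare (-1 : F))
    (hsq2 : ∀ (ℓ : Type) [Field ℓ] [Algebra F ℓ] [FiniteDimensional F ℓ],
      ∀ x y z : ℓ, x ≠ 0 → y ≠ 0 → z ≠ 0 →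
        IsSquare (x * y) ∨ IsSquare (x * z) ∨ IsSquare (y * z))
    (Kγ : Type) [Field Kγ] (f : RatFunc F →+* Kγ)
    (O : Subring Kγ) [IsDomain ↥O] [IsDiscreteValuationRing ↥O] [HenselianLocalRing ↥O]
    [Algebra ↥O Kγ] [IsFractionRing ↥O Kγ]
    (hconst : ∀ c : F, c ≠ 0 → ∃ w : (↥O)ˣ, ((w : ↥O) : Kγ) = f (RatFunc.C c))
    [Algebra F (IsLocalRing.ResidueField ↥O)]
    [FiniteDimensional F (IsLocalRing.ResidueField ↥O)]
    (hres : ∀ (c : F) (h : f (RatFunc.C c) ∈ O),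
      algebraMap F (IsLocalRing.ResidueField ↥O) c
        = IsLocalRing.residue ↥O ⟨f (RatFunc.C c), h⟩) :
    IsSquare (f RatFunc.X) ∨ IsSquare (f (RatFunc.X + 1))
      ∨ IsSquare (f (RatFunc.X * (RatFunc.X + 1))) := by
  classical
  set R := ↥O
  set ℓ := IsLocalRing.ResidueField R
  set g := algebraMap R Kγ with hg
  set a := f RatFunc.X with ha
  have hfa1 : f (RatFunc.X + 1) = a + 1 := by rw [map_add, map_one]
  have hfab : f (RatFunc.X * (RatFunc.X + 1)) = a * (a + 1) := by
    rw [map_mul, hfa1]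
  have hane : a ≠ 0 := by
    rw [ha]
    intro h
    exact RatFunc.X_ne_zero (f.injective (by rw [h, map_zero]))
  -- 2 has nonzero residue
  have h2ℓ : (2 : ℓ) ≠ 0 := by
    intro h
    apply h2
    apply (algebraMap F ℓ).injective
    rw [map_ofNat, map_zero, h]
  have h2res : residue R 2 ≠ 0 := by
    rw [map_ofNat]; exact h2ℓ
  -- -1 is a square in ℓ
  have hnegℓ : IsSquare (-1 : ℓ) := by
    obtain ⟨s, hs⟩ := hneg
    exact ⟨algebraMap F ℓ s, by rw [← map_mul, ← hs, map_neg, map_one]⟩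
  -- the case where `a` is integral over O
  have hint : (∃ α : R, g α = a) →
      IsSquare (f RatFunc.X) ∨ IsSquare (f (RatFunc.X + 1))
        ∨ IsSquare (f (RatFunc.X * (RatFunc.X + 1))) := by
    rintro ⟨α, hα⟩
    by_cases h0 : residue R α = 0
    · -- α in the maximal ideal: a + 1 has residue 1, a square
      obtain ⟨β, hβ⟩ := hensel_sq h2res (α + 1)
        (by rw [map_add, map_one, h0, zero_add]; exact IsSquare.one)
        (by rw [map_add, map_one, h0, zero_add]; exact one_ne_zero)
      right; left
      exact ⟨g β, by rw [hfa1, ← hα, ← map_one g, ← map_add, ← hβ, map_mul]⟩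
    · by_cases h1 : residue R (α + 1) = 0
      · -- residue of α is -1, a square
        have hαneg : residue R α = -1 := by
          rw [map_add, map_one] at h1
          exact eq_neg_of_add_eq_zero_left h1
        obtain ⟨β, hβ⟩ := hensel_sq h2res α (by rw [hαneg]; exact hnegℓ)
          (by rw [hαneg]; exact neg_ne_zero.mpr one_ne_zero)
        left
        exact ⟨g β, by rw [← ha, ← hα, ← hβ, map_mul]⟩
      · rcases hsq2 ℓ (residue R α) (residue R (α + 1)) 1 h0 h1 one_ne_zero with h | h | h
        · -- a(a+1) is a square
          obtain ⟨β, hβ⟩ := hensel_sq h2res (α * (α + 1)) (by rw [map_mul]; exact h)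
            (by rw [map_mul]; exact mul_ne_zero h0 h1)
          right; right
          refine ⟨g β, ?_⟩
          rw [hfab, ← hα, ← map_one g, ← map_add, ← map_mul, ← hβ, map_mul]
        · -- a is a square
          rw [mul_one] at h
          obtain ⟨β, hβ⟩ := hensel_sq h2res α h h0
          left
          exact ⟨g β, by rw [← ha, ← hα, ← hβ, map_mul]⟩
        · -- a + 1 is a square
          rw [mul_one] at h
          obtain ⟨β, hβ⟩ := hensel_sq h2res (α + 1) h h1
          right; left
          exact ⟨g β, by rw [hfa1, ← hα, ← map_one g, ← map_add, ← hβ, map_mul]⟩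
  by_cases hcase : ∃ α : R, g α = a
  · exact hint hcase
  · -- a⁻¹ is integral and is a non-unit; then a(a+1) = a²(1 + a⁻¹) is a square
    have hval : IsLocalization.IsInteger R a ∨ IsLocalization.IsInteger R a⁻¹ :=
      ValuationRing.isInteger_or_isInteger R a
    obtain ⟨β, hβ⟩ : ∃ β : R, g β = a⁻¹ := by
      rcases hval with h | h
      · exact absurd h hcase
      · exact h
    have hβnu : ¬ IsUnit β := by
      rintro ⟨u, rfl⟩
      apply hcase
      refine ⟨(u⁻¹ : Rˣ), ?_⟩
      have h1 : a⁻¹ * g ((u⁻¹ : Rˣ) : R) = 1 := by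
        rw [← hβ, ← map_mul, ← Units.val_mul, mul_inv_cancel, Units.val_one, map_one]
      have ht : g ((u⁻¹ : Rˣ) : R) = (a⁻¹)⁻¹ := eq_inv_of_mul_eq_one_right h1
      rw [inv_inv] at ht
      exact ht
    have hβ0 : residue R β = 0 := by
      by_contra h
      exact hβnu ((residue_ne_zero_iff_isUnit β).mp h)
    obtain ⟨c, hc⟩ := hensel_sq h2res (1 + β)
      (by rw [map_add, map_one, hβ0, add_zero]; exact IsSquare.one)
      (by rw [map_add, map_one, hβ0, add_zero]; exact one_ne_zero)
    right; right
    refine ⟨a * g c, ?_⟩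
    have hgc : g c * g c = 1 + a⁻¹ := by
      rw [← map_mul, hc, map_add, map_one, hβ]
    rw [hfab]
    have : a * g c * (a * g c) = a * a * (g c * g c) := by ring
    rw [this, hgc]
    field_simp
end
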